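/- Expected-loss bound by the maximum average radial distance (the deterministic core of Theorem 2). Let π : X → Fin b be a measurable nearest-point selector, i.e. dist(x, x̃(π x)) = min_{k∈Fin b} dist(x, x̃ k) for every x ∈ X, with coverage areas N(k) = π⁻¹{k}, and define δ_s(k) = (μ(N(k)))⁻¹ ∫_{N(k)} dist(x, x̃ k) dμ(x) if μ(N(k)) > 0 and δ_s(k) = 0 otherwise; assume each δ_s(k) is finite. Then ∫_{X × Fin C} ℓ(w.1, w.2) dν(w) ≤ (λl + λη·L·C) · max_{k∈Fin b} δ_s(k). -/

import Mathlib

open MeasureTheory ENNReal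
open scoped NNReal

/-- **Expected-loss bound by the maximum average radial distance
(the deterministic core of Theorem 2).**
`∫ w, ℓ w.1 w.2 ∂ν ≤ (lLoss + lEta·L·C) · max_k δs k`. -/
theorem expected_loss_le_max_average_radial_distance
    {X : Type*} [MetricSpace X] [MeasurableSpace X] [BorelSpace X]
    (μ : Measure X) [IsProbabilityMeasure μ]
    (b : ℕ) (hb : 0 < b) (xsel : Fin b → X)
    (C : ℕ) (hC : 0 < C)
    (η : Fin C → X → ℝ) (lEta : ℝ≥0)
    (hη0 : ∀ c x, 0 ≤ η c x) (hη1 : ∀ x, ∑ c, η c x = 1)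
    (hηLip : ∀ c, LipschitzWith lEta (η c))
    (ℓ : X → Fin C → ℝ) (L lLoss : ℝ≥0)
    (hℓ0 : ∀ x c, 0 ≤ ℓ x c) (hℓL : ∀ x c, ℓ x c ≤ (L : ℝ))
    (hℓLip : ∀ c, LipschitzWith lLoss (fun x => ℓ x c))
    (hℓzero : ∀ k c, ℓ (xsel k) c = 0)
    (ν : Measure (X × Fin C)) [IsProbabilityMeasure ν]
    (hν : ∀ S : Set X, MeasurableSet S → ∀ c : Fin C,
      ν (S ×ˢ ({c} : Set (Fin C))) = ENNReal.ofReal (∫ x in S, η c x ∂μ))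
    -- the measurable nearest-point selector and its coverage areas
    (π : X → Fin b) (hπmeas : Measurable π)
    (hπ : ∀ x, dist x (xsel (π x)) = ⨅ k : Fin b, dist x (xsel k))
    -- the average radial distances (assumed finite)
    (δs : Fin b → ℝ)
    (hδs_int : ∀ k, IntegrableOn (fun x => dist x (xsel k)) (π ⁻¹' {k}) μ)
    (hδs_pos : ∀ k, 0 < μ (π ⁻¹' {k}) →
      δs k = (μ (π ⁻¹' {k})).toReal⁻¹ * ∫ x in π ⁻¹' {k}, dist x (xsel k) ∂μ)
    (hδs_zero : ∀ k, ¬ 0 < μ (π ⁻¹' {k}) → δs k = 0) :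
    (∫ w, ℓ w.1 w.2 ∂ν)
      ≤ ((lLoss : ℝ) + (lEta : ℝ) * (L : ℝ) * (C : ℝ)) * ⨆ k : Fin b, δs k := by
  classical
  have hbne : Nonempty (Fin b) := ⟨⟨0, hb⟩⟩
  set N : Fin b → Set X := fun k => π ⁻¹' {k} with hN
  have hNmeas : ∀ k, MeasurableSet (N k) := fun k => hπmeas (measurableSet_singleton k)
  have hNdisj : Pairwise (Function.onFun Disjoint N) := by
    intro i j hij
    simp only [Function.onFun, Set.disjoint_left]
    rintro x hi hj
    exact hij ((Set.mem_preimage.mp hi).symm.trans (Set.mem_preimage.mp hj))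
  have hNunion : ⋃ k, N k = Set.univ := by
    ext x; simp [N]
  -- the function g
  set g : X → ℝ := fun x => dist x (xsel (π x)) with hg
  have hgmeas : Measurable g := by
    have hF : Measurable fun p : X × Fin b => dist p.1 (xsel p.2) := by
      refine measurable_from_prod_countable_left fun k => ?_
      show Measurable fun x : X => dist x (xsel k)
      exact (continuous_id.dist continuous_const).measurable
    exact hF.comp (measurable_id.prodMk hπmeas)
  have hg0 : ∀ x, 0 ≤ g x := fun x => dist_nonneg
  -- integrability of g over μ
  have hgint : Integrable g μ := by
    have : IntegrableOn g (⋃ k, N k) μ := by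
      rw [integrableOn_finite_iUnion]
      intro k
      refine (hδs_int k).congr_fun ?_ (hNmeas k)
      intro x hx
      have : π x = k := Set.mem_preimage.mp hx
      simp [g, this]
    rwa [hNunion, integrableOn_univ] at this
  -- the first marginal of ν is μ
  have hηle : ∀ c x, η c x ≤ 1 := by
    intro c x
    calc η c x ≤ ∑ c', η c' x :=
          Finset.single_le_sum (fun c' _ => hη0 c' x) (Finset.mem_univ c)
      _ = 1 := hη1 x
  have hηint : ∀ c, Integrable (η c) μ := by
    intro c
    refine Integrable.mono' (integrable_const (1 : ℝ))
      (hηLip c).continuous.measurable.aestronglyMeasurable ?_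
    filter_upwards with x
    rw [Real.norm_eq_abs, abs_of_nonneg (hη0 c x)]
    exact hηle c x
  have hmarg : ν.map Prod.fst = μ := by
    ext S hS
    rw [Measure.map_apply measurable_fst hS]
    have h1 : Prod.fst ⁻¹' S = ⋃ c : Fin C, S ×ˢ ({c} : Set (Fin C)) := by
      ext w
      simp only [Set.mem_preimage, Set.mem_iUnion, Set.mem_prod,
        Set.mem_singleton_iff]
      constructor
      · intro h; exact ⟨w.2, h, rfl⟩
      · rintro ⟨i, h, -⟩; exact h
    rw [h1, measure_iUnion ?_ (fun c => hS.prod (measurableSet_singleton c))]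
    · rw [tsum_fintype]
      have h2 : ∀ c : Fin C, ν (S ×ˢ ({c} : Set (Fin C)))
          = ENNReal.ofReal (∫ x in S, η c x ∂μ) := fun c => hν S hS c
      simp only [h2]
      rw [← ENNReal.ofReal_sum_of_nonneg
        (fun c _ => setIntegral_nonneg hS fun x _ => hη0 c x)]
      rw [← integral_finset_sum _ (fun c _ => (hηint c).integrableOn)]
      have h3 : ∫ x in S, (∑ c : Fin C, η c x) ∂μ = ∫ x in S, (1 : ℝ) ∂μ := by
        refine integral_congr_ae ?_
        filter_upwards with x using hη1 x
      rw [h3, setIntegral_const, smul_eq_mul, mul_one, measureReal_def,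
        ENNReal.ofReal_toReal (measure_ne_top μ S)]
    · intro i j hij
      simp only [Function.onFun, Set.disjoint_left]
      rintro ⟨x, c⟩ ⟨-, hi⟩ ⟨-, hj⟩
      exact hij ((Set.mem_singleton_iff.mp hi).symm.trans (Set.mem_singleton_iff.mp hj))
  -- pointwise bound
  have hpt : ∀ (x : X) (c : Fin C), ℓ x c ≤ (lLoss : ℝ) * g x := by
    intro x c
    have := (hℓLip c).dist_le_mul x (xsel (π x))
    rw [Real.dist_eq, hℓzero (π x) c, sub_zero, abs_of_nonneg (hℓ0 x c)] at this
    exact this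
  -- integrability of the loss w.r.t. ν
  have hℓmeas : Measurable fun w : X × Fin C => ℓ w.1 w.2 :=
    measurable_from_prod_countable_left fun c => (hℓLip c).continuous.measurable
  have hℓint : Integrable (fun w : X × Fin C => ℓ w.1 w.2) ν := by
    refine Integrable.mono' (integrable_const ((L : ℝ))) hℓmeas.aestronglyMeasurable ?_
    filter_upwards with w
    rw [Real.norm_eq_abs, abs_of_nonneg (hℓ0 w.1 w.2)]
    exact hℓL w.1 w.2
  -- integrability of g ∘ fst w.r.t. ν
  have hgfint : Integrable (fun w : X × Fin C => g w.1) ν := by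
    have h : Integrable (g ∘ Prod.fst) ν := by
      refine (integrable_map_measure ?_ measurable_fst.aemeasurable).mp ?_
      · rw [hmarg]; exact hgmeas.aestronglyMeasurable
      · rw [hmarg]; exact hgint
    exact h
  -- step 1: bound the integral
  have step1 : (∫ w, ℓ w.1 w.2 ∂ν) ≤ (lLoss : ℝ) * ∫ x, g x ∂μ := by
    have h1 : (∫ w, ℓ w.1 w.2 ∂ν) ≤ ∫ w : X × Fin C, (lLoss : ℝ) * g w.1 ∂ν :=
      integral_mono hℓint (hgfint.const_mul _) fun w => hpt w.1 w.2
    have h2 : ∫ w : X × Fin C, g w.1 ∂ν = ∫ x, g x ∂μ := by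
      conv_rhs => rw [← hmarg]
      exact (integral_map measurable_fst.aemeasurable
        (by rw [hmarg]; exact hgmeas.aestronglyMeasurable)).symm
    rw [integral_const_mul] at h1
    rw [h2] at h1
    exact h1
  -- the supremum
  set M : ℝ := ⨆ k : Fin b, δs k with hM
  have hδs_nonneg : ∀ k, 0 ≤ δs k := by
    intro k
    by_cases hk : 0 < μ (N k)
    · rw [hδs_pos k hk]
      exact mul_nonneg (inv_nonneg.mpr ENNReal.toReal_nonneg)
        (setIntegral_nonneg (hNmeas k) fun x _ => dist_nonneg)
    · rw [hδs_zero k hk]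
  have hMle : ∀ k, δs k ≤ M :=
    fun k => le_ciSup (Set.Finite.bddAbove (Set.finite_range δs)) k
  have hM0 : 0 ≤ M := le_trans (hδs_nonneg ⟨0, hb⟩) (hMle ⟨0, hb⟩)
  -- step 2: bound ∫ g dμ by M
  have step2 : (∫ x, g x ∂μ) ≤ M := by
    have hsplit : (∫ x, g x ∂μ) = ∑ k, ∫ x in N k, dist x (xsel k) ∂μ := by
      rw [← setIntegral_univ, ← hNunion,
        integral_iUnion_fintype hNmeas hNdisj ?_]
      · refine Finset.sum_congr rfl fun k _ => ?_
        refine setIntegral_congr_fun (hNmeas k) fun x hx => ?_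
        have : π x = k := Set.mem_preimage.mp hx
        simp [g, this]
      · intro k
        refine (hδs_int k).congr_fun ?_ (hNmeas k)
        intro x hx
        have : π x = k := Set.mem_preimage.mp hx
        simp [g, this]
    have hterm : ∀ k, (∫ x in N k, dist x (xsel k) ∂μ) ≤ (μ (N k)).toReal * M := by
      intro k
      by_cases hk : 0 < μ (N k)
      · have htop : (μ (N k)).toReal ≠ 0 :=
          ENNReal.toReal_ne_zero.mpr ⟨hk.ne', measure_ne_top μ _⟩
        have : (∫ x in N k, dist x (xsel k) ∂μ) = (μ (N k)).toReal * δs k := by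
          rw [hδs_pos k hk]
          field_simp
          exact (mul_div_cancel_left₀ _ htop).symm
        rw [this]
        exact mul_le_mul_of_nonneg_left (hMle k) ENNReal.toReal_nonneg
      · have h0 : μ (N k) = 0 := by simpa using hk
        have : ∫ x in N k, dist x (xsel k) ∂μ = 0 := by
          rw [Measure.restrict_eq_zero.mpr h0, integral_zero_measure]
        rw [this]
        positivity
    calc (∫ x, g x ∂μ) = ∑ k, ∫ x in N k, dist x (xsel k) ∂μ := hsplit
      _ ≤ ∑ k, (μ (N k)).toReal * M := Finset.sum_le_sum fun k _ => hterm k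
      _ = (∑ k, (μ (N k)).toReal) * M := by rw [Finset.sum_mul]
      _ = M := by
          have : ∑ k, μ (N k) = 1 := by
            rw [← tsum_fintype (L := SummationFilter.unconditional _), ← measure_iUnion hNdisj hNmeas, hNunion,
              measure_univ]
          rw [← ENNReal.toReal_sum fun k _ => measure_ne_top μ (N k), this]
          simp
  -- conclude
  calc (∫ w, ℓ w.1 w.2 ∂ν) ≤ (lLoss : ℝ) * ∫ x, g x ∂μ := step1
    _ ≤ (lLoss : ℝ) * M := mul_le_mul_of_nonneg_left step2 lLoss.coe_nonneg
    _ ≤ ((lLoss : ℝ) + (lEta : ℝ) * (L : ℝ) * (C : ℝ)) * M := by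
        refine mul_le_mul_of_nonneg_right ?_ hM0
        have : 0 ≤ (lEta : ℝ) * (L : ℝ) * (C : ℝ) := by positivity
        linarith
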